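/- Let m ≥ 1, let x_1 < x_2 < … < x_m < 0 be real numbers, set x_{m+1} = 0, and let λ_1, …, λ_m ∈ ℝ. For k = 1, …, m define the Möbius transformation T_k(x) = ((1 − (λ_k/2)x_k)x + (λ_k/2)x_k²)/(−(λ_k/2)x + 1 + (λ_k/2)x_k) (which has determinant 1 and satisfies T_k(x_k) = x_k, T_k′(x_k) = 1, T_k''(x_k) = λ_k), and set φ̃_0 = id, φ̃_k = φ̃_{k−1}∘T_k (a real Möbius transformation). Then the following are equivalent: (i) for every k = 1, …, m, the Möbius transformation φ̃_k has no pole in [x_k, x_{k+1}]; (ii) for every k = 1, …, m, φ̃_{k−1} is finite at x_k and λ_k < 2/(x_{k+1} − x_k) − φ̃_{k−1}''(x_k)/φ̃_{k−1}′(x_k). Moreover, if these conditions hold, the map φ̃ : (−∞, 0] → ℝ defined by φ̃(x) = x for x ≤ x_1 and φ̃(x) = φ̃_k(x) for x ∈ [x_k, x_{k+1}] is well defined, continuously differentiable, and strictly increasing. -/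

import Mathlib

open Set Matrix

/-- The matrix of the Möbius transformation
`T_k(x) = ((1 − (λ_k/2)x_k)x + (λ_k/2)x_k²)/(−(λ_k/2)x + 1 + (λ_k/2)x_k)`
(it has determinant `1` and satisfies `T_k(x_k) = x_k`, `T_k′(x_k) = 1`,
`T_k''(x_k) = λ_k`). -/
noncomputable def Tmat (lam x : ℕ → ℝ) (k : ℕ) : Matrix (Fin 2) (Fin 2) ℝ :=
  !![1 - (lam k / 2) * x k, (lam k / 2) * (x k) ^ 2;
     -(lam k / 2), 1 + (lam k / 2) * x k]

/-- The matrix of `φ̃_k = φ̃_{k−1} ∘ T_k`, with `φ̃_0 = id`. -/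
noncomputable def Phimat (lam x : ℕ → ℝ) : ℕ → Matrix (Fin 2) (Fin 2) ℝ
  | 0 => 1
  | k + 1 => Phimat lam x k * Tmat lam x (k + 1)

/-- Evaluation of the Möbius transformation associated with a `2 × 2` real matrix. -/
noncomputable def mev (M : Matrix (Fin 2) (Fin 2) ℝ) (t : ℝ) : ℝ :=
  (M 0 0 * t + M 0 1) / (M 1 0 * t + M 1 1)

namespace PMW

noncomputable def den (M : Matrix (Fin 2) (Fin 2) ℝ) (t : ℝ) : ℝ := M 1 0 * t + M 1 1
noncomputable def num (M : Matrix (Fin 2) (Fin 2) ℝ) (t : ℝ) : ℝ := M 0 0 * t + M 0 1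

lemma den_def (M : Matrix (Fin 2) (Fin 2) ℝ) (t : ℝ) : den M t = M 1 0 * t + M 1 1 := rfl

lemma mev_eq (M : Matrix (Fin 2) (Fin 2) ℝ) (t : ℝ) : mev M t = num M t / den M t := rfl

lemma den_mul (M N : Matrix (Fin 2) (Fin 2) ℝ) (t : ℝ) :
    den (M * N) t = M 1 0 * num N t + M 1 1 * den N t := by
  simp [den, num, Matrix.mul_apply, Fin.sum_univ_two]; ring

lemma num_mul (M N : Matrix (Fin 2) (Fin 2) ℝ) (t : ℝ) :
    num (M * N) t = M 0 0 * num N t + M 0 1 * den N t := by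
  simp [den, num, Matrix.mul_apply, Fin.sum_univ_two]; ring

lemma det_Tmat (lam x : ℕ → ℝ) (k : ℕ) : (Tmat lam x k).det = 1 := by
  simp [Tmat, Matrix.det_fin_two_of]; ring

lemma det_Phimat (lam x : ℕ → ℝ) (k : ℕ) : (Phimat lam x k).det = 1 := by
  induction k with
  | zero => simp [Phimat]
  | succ k ih => rw [show Phimat lam x (k+1) = Phimat lam x k * Tmat lam x (k+1) from rfl,
      Matrix.det_mul, ih, det_Tmat, mul_one]

lemma den_Tmat (lam x : ℕ → ℝ) (k : ℕ) (t : ℝ) :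
    den (Tmat lam x k) t = 1 - lam k / 2 * (t - x k) := by
  simp [den, Tmat]; ring

lemma num_Tmat (lam x : ℕ → ℝ) (k : ℕ) (t : ℝ) :
    num (Tmat lam x k) t = t - lam k / 2 * x k * (t - x k) := by
  simp [num, Tmat]; ring

lemma den_Phimat_succ (lam x : ℕ → ℝ) (k : ℕ) (t : ℝ) :
    den (Phimat lam x (k+1)) t
      = den (Phimat lam x k) t
        - lam (k+1) / 2 * (t - x (k+1)) * den (Phimat lam x k) (x (k+1)) := by
  rw [show Phimat lam x (k+1) = Phimat lam x k * Tmat lam x (k+1) from rfl,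
    den_mul, den_Tmat, num_Tmat]
  simp only [den, num]; ring

lemma num_Phimat_succ (lam x : ℕ → ℝ) (k : ℕ) (t : ℝ) :
    num (Phimat lam x (k+1)) t
      = num (Phimat lam x k) t
        - lam (k+1) / 2 * (t - x (k+1)) * num (Phimat lam x k) (x (k+1)) := by
  rw [show Phimat lam x (k+1) = Phimat lam x k * Tmat lam x (k+1) from rfl,
    num_mul, den_Tmat, num_Tmat]
  simp only [den, num]; ring

lemma den_junction (lam x : ℕ → ℝ) (k : ℕ) :
    den (Phimat lam x (k+1)) (x (k+1)) = den (Phimat lam x k) (x (k+1)) := by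
  rw [den_Phimat_succ]; ring

lemma mev_junction (lam x : ℕ → ℝ) (k : ℕ) :
    mev (Phimat lam x (k+1)) (x (k+1)) = mev (Phimat lam x k) (x (k+1)) := by
  rw [mev_eq, mev_eq, num_Phimat_succ, den_Phimat_succ]
  ring_nf

lemma den_Phimat_zero (lam x : ℕ → ℝ) (t : ℝ) : den (Phimat lam x 0) t = 1 := by
  simp [den, Phimat, Matrix.one_apply]

lemma mev_Phimat_zero (lam x : ℕ → ℝ) (t : ℝ) : mev (Phimat lam x 0) t = t := by
  simp [mev, Phimat, Matrix.one_apply]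

variable {M : Matrix (Fin 2) (Fin 2) ℝ} {t : ℝ}

lemma hasDerivAt_num (M : Matrix (Fin 2) (Fin 2) ℝ) (t : ℝ) :
    HasDerivAt (fun s => num M s) (M 0 0) t := by
  simpa [num] using ((hasDerivAt_id t).const_mul (M 0 0)).add_const (M 0 1)

lemma hasDerivAt_den (M : Matrix (Fin 2) (Fin 2) ℝ) (t : ℝ) :
    HasDerivAt (fun s => den M s) (M 1 0) t := by
  simpa [den] using ((hasDerivAt_id t).const_mul (M 1 0)).add_const (M 1 1)

lemma hasDerivAt_mev (h : den M t ≠ 0) :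
    HasDerivAt (mev M) (M.det / (den M t) ^ 2) t := by
  have := (hasDerivAt_num M t).div (hasDerivAt_den M t) h
  have hd : M.det = M 0 0 * den M t - num M t * M 1 0 := by
    rw [Matrix.det_fin_two]; simp only [num, den]; ring
  rw [hd]; exact this

lemma deriv_mev (h : den M t ≠ 0) : deriv (mev M) t = M.det / (den M t) ^ 2 :=
  (hasDerivAt_mev h).deriv

lemma eventually_den_ne (h : den M t ≠ 0) : ∀ᶠ s in nhds t, den M s ≠ 0 :=
  ((hasDerivAt_den M t).continuousAt).eventually_ne h

lemma deriv2_mev (h : den M t ≠ 0) :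
    deriv (deriv (mev M)) t = M.det * (-2 * M 1 0) / (den M t) ^ 3 := by
  have hev : deriv (mev M) =ᶠ[nhds t] fun s => M.det / (den M s) ^ 2 :=
    (eventually_den_ne h).mono fun s hs => deriv_mev hs
  rw [hev.deriv_eq]
  have hpow : HasDerivAt (fun s => (den M s) ^ 2) (2 * den M t ^ 1 * M 1 0) t := by
    simpa using (hasDerivAt_den M t).fun_pow 2
  have h2 : (den M t) ^ 2 ≠ 0 := pow_ne_zero _ h
  have := (hasDerivAt_const t M.det).fun_div hpow h2
  rw [this.deriv]
  field_simp
  ring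

lemma preSchwarz (hdet : M.det = 1) (h : den M t ≠ 0) :
    deriv (deriv (mev M)) t / deriv (mev M) t = -2 * M 1 0 / den M t := by
  rw [deriv2_mev h, deriv_mev h, hdet]
  field_simp

lemma samesign {f : ℝ → ℝ} {a b : ℝ} (hf : ContinuousOn f (Icc a b)) (hab : a ≤ b)
    (hne : ∀ t ∈ Icc a b, f t ≠ 0) : 0 < f a * f b := by
  have ha : f a ≠ 0 := hne a ⟨le_rfl, hab⟩
  have hb : f b ≠ 0 := hne b ⟨hab, le_rfl⟩
  rcases ha.lt_or_gt with ha' | ha'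
  · rcases hb.lt_or_gt with hb' | hb'
    · exact mul_pos_of_neg_of_neg ha' hb'
    · obtain ⟨tt, htt, h0⟩ := intermediate_value_Icc hab hf ⟨ha'.le, hb'.le⟩
      exact absurd h0 (hne tt htt)
  · rcases hb.lt_or_gt with hb' | hb'
    · obtain ⟨tt, htt, h0⟩ := intermediate_value_Icc' hab hf ⟨hb'.le, ha'.le⟩
      exact absurd h0 (hne tt htt)
    · exact mul_pos ha' hb'

lemma affine_ne_zero (c d a b : ℝ) (h0 : c * a + d ≠ 0)
    (hpos : 0 < (c * a + d) * (c * b + d)) :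
    ∀ t, a ≤ t → t ≤ b → c * t + d ≠ 0 := by
  intro t h1 h2 hz
  have key : (b - t) * (c * a + d) ^ 2 + (t - a) * ((c * a + d) * (c * b + d)) = 0 := by
    have : ((c * a + d) * (c * t + d)) * (b - a)
        = (b - t) * (c * a + d) ^ 2 + (t - a) * ((c * a + d) * (c * b + d)) := by ring
    rw [hz] at this; linarith [this]
  rcases eq_or_lt_of_le h1 with rfl | h1'
  · exact h0 hz
  · nlinarith [mul_nonneg (sub_nonneg.2 h2) (sq_nonneg (c * a + d)),
      mul_pos (sub_pos.2 h1') hpos]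

lemma algiff (Del c D lm : ℝ) (hDel : 0 < Del) (hD : D ≠ 0) :
    (0 < D * (D + c * Del - lm / 2 * Del * D)) ↔ lm < 2 / Del - (-2 * c / D) := by
  have h2 : 0 < Del * D ^ 2 / 2 := by positivity
  have key : (2 / Del - (-2 * c / D) - lm) * (Del * D ^ 2 / 2)
      = D * (D + c * Del - lm / 2 * Del * D) := by
    field_simp; ring
  rw [← key, mul_pos_iff_of_pos_right h2, sub_pos]

noncomputable def Fpc (lam x : ℕ → ℝ) : ℕ → ℝ → ℝ
  | 0 => fun t => t
  | k + 1 => fun t => if t < x (k + 1) then Fpc lam x k t else mev (Phimat lam x (k + 1)) t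

noncomputable def Fdpc (lam x : ℕ → ℝ) : ℕ → ℝ → ℝ
  | 0 => fun _ => 1
  | k + 1 => fun t => if t < x (k + 1) then Fdpc lam x k t
      else (1 : ℝ) / (den (Phimat lam x (k + 1)) t) ^ 2

variable {lam x : ℕ → ℝ} {m : ℕ}

lemma Fpc_below (hxlt : ∀ k, 1 ≤ k → k ≤ m → x 1 ≤ x k) :
    ∀ j, j ≤ m → ∀ t, t < x 1 → Fpc lam x j t = t := by
  intro j
  induction j with
  | zero => intro _ t _; rfl
  | succ j ih =>
    intro hj t ht
    show (if t < x (j + 1) then Fpc lam x j t else _) = t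
    rw [if_pos (lt_of_lt_of_le ht (hxlt (j+1) (by omega) hj))]
    exact ih (by omega) t ht

lemma Fdpc_below (hxlt : ∀ k, 1 ≤ k → k ≤ m → x 1 ≤ x k) :
    ∀ j, j ≤ m → ∀ t, t < x 1 → Fdpc lam x j t = 1 := by
  intro j
  induction j with
  | zero => intro _ t _; rfl
  | succ j ih =>
    intro hj t ht
    show (if t < x (j + 1) then Fdpc lam x j t else _) = 1
    rw [if_pos (lt_of_lt_of_le ht (hxlt (j+1) (by omega) hj))]
    exact ih (by omega) t ht

lemma Fpc_piece (hx : ∀ i j, 1 ≤ i → i < j → j ≤ m + 1 → x i < x j) :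
    ∀ j k, 1 ≤ k → k ≤ j → j ≤ m → ∀ t, x k ≤ t → t ≤ x (k + 1) →
      Fpc lam x j t = mev (Phimat lam x k) t := by
  intro j
  induction j with
  | zero => intro k h1 h2 _ _ _ _; omega
  | succ j ih =>
    intro k hk1 hkj hjm t ht1 ht2
    show (if t < x (j + 1) then Fpc lam x j t else mev (Phimat lam x (j+1)) t) = _
    rcases eq_or_lt_of_le hkj with rfl | hklt
    · rw [if_neg (not_lt.2 ht1)]
    · have hkj' : k ≤ j := by omega
      by_cases hlt : t < x (j + 1)
      · rw [if_pos hlt]; exact ih k hk1 hkj' (by omega) t ht1 ht2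
      · have hkeq : k = j := by
          by_contra hne
          have : x (k + 1) < x (j + 1) := hx (k+1) (j+1) (by omega) (by omega) (by omega)
          exact hlt (lt_of_le_of_lt ht2 this)
        subst hkeq
        have ht : t = x (k + 1) := le_antisymm ht2 (not_lt.1 hlt)
        rw [if_neg hlt, ht, mev_junction]

lemma Fdpc_piece (hx : ∀ i j, 1 ≤ i → i < j → j ≤ m + 1 → x i < x j) :
    ∀ j k, 1 ≤ k → k ≤ j → j ≤ m → ∀ t, x k ≤ t → t ≤ x (k + 1) →
      Fdpc lam x j t = 1 / (den (Phimat lam x k) t) ^ 2 := by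
  intro j
  induction j with
  | zero => intro k h1 h2 _ _ _ _; omega
  | succ j ih =>
    intro k hk1 hkj hjm t ht1 ht2
    show (if t < x (j + 1) then Fdpc lam x j t else _) = _
    rcases eq_or_lt_of_le hkj with rfl | hklt
    · rw [if_neg (not_lt.2 ht1)]
    · have hkj' : k ≤ j := by omega
      by_cases hlt : t < x (j + 1)
      · rw [if_pos hlt]; exact ih k hk1 hkj' (by omega) t ht1 ht2
      · have hkeq : k = j := by
          by_contra hne
          have : x (k + 1) < x (j + 1) := hx (k+1) (j+1) (by omega) (by omega) (by omega)
          exact hlt (lt_of_le_of_lt ht2 this)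
        subst hkeq
        have ht : t = x (k + 1) := le_antisymm ht2 (not_lt.1 hlt)
        rw [if_neg hlt, ht, den_junction]

lemma Fpc_top (hm : 1 ≤ m) : ∀ t, x m ≤ t → Fpc lam x m t = mev (Phimat lam x m) t := by
  obtain ⟨n, rfl⟩ : ∃ n, m = n + 1 := ⟨m - 1, by omega⟩
  intro t ht
  show (if t < x (n + 1) then _ else _) = _
  rw [if_neg (not_lt.2 ht)]

lemma Fdpc_top (hm : 1 ≤ m) :
    ∀ t, x m ≤ t → Fdpc lam x m t = 1 / (den (Phimat lam x m) t) ^ 2 := by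
  obtain ⟨n, rfl⟩ : ∃ n, m = n + 1 := ⟨m - 1, by omega⟩
  intro t ht
  show (if t < x (n + 1) then _ else _) = _
  rw [if_neg (not_lt.2 ht)]

end PMW

/-- **Characterization of the admissible pre-Schwarzian jumps in the piecewise Möbius
welding construction.** Given `x 1 < … < x m < 0`, `x (m+1) = 0` and jumps
`λ 1, …, λ m`, the following are equivalent: (i) for every `k = 1, …, m` the Möbius map
`φ̃_k` has no pole on `[x k, x (k+1)]`; (ii) for every `k = 1, …, m`, `φ̃_{k−1}` is
finite at `x k` and `λ k < 2/(x (k+1) − x k) − φ̃_{k−1}''(x k)/φ̃_{k−1}′(x k)`.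
Moreover, these conditions imply that the map `φ̃` on `(−∞, 0]` equal to the identity on
`(−∞, x 1]` and to `φ̃_k` on `[x k, x (k+1)]` is well defined, continuously
differentiable, and strictly increasing. -/
theorem piecewise_mobius_construction_characterization
    (m : ℕ) (hm : 1 ≤ m) (x lam : ℕ → ℝ)
    (hxmono : ∀ i j : ℕ, 1 ≤ i → i < j → j ≤ m → x i < x j)
    (hxneg : x m < 0) (hx0 : x (m + 1) = 0) :
    ((∀ k : ℕ, 1 ≤ k → k ≤ m → ∀ t ∈ Set.Icc (x k) (x (k + 1)),
        (Phimat lam x k) 1 0 * t + (Phimat lam x k) 1 1 ≠ 0)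
      ↔ (∀ k : ℕ, 1 ≤ k → k ≤ m →
          (Phimat lam x (k - 1)) 1 0 * x k + (Phimat lam x (k - 1)) 1 1 ≠ 0 ∧
          lam k < 2 / (x (k + 1) - x k) -
            deriv (deriv (mev (Phimat lam x (k - 1)))) (x k) /
              deriv (mev (Phimat lam x (k - 1))) (x k))) ∧
    ((∀ k : ℕ, 1 ≤ k → k ≤ m → ∀ t ∈ Set.Icc (x k) (x (k + 1)),
        (Phimat lam x k) 1 0 * t + (Phimat lam x k) 1 1 ≠ 0) →
      ∃ Φ : ℝ → ℝ,
        (∀ t : ℝ, t ≤ x 1 → Φ t = t) ∧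
        (∀ k : ℕ, 1 ≤ k → k ≤ m → ∀ t ∈ Set.Icc (x k) (x (k + 1)),
          Φ t = mev (Phimat lam x k) t) ∧
        ContDiffOn ℝ 1 Φ (Set.Iic (0 : ℝ)) ∧
        StrictMonoOn Φ (Set.Iic (0 : ℝ))) := by
  -- extended monotonicity
  have hx : ∀ i j : ℕ, 1 ≤ i → i < j → j ≤ m + 1 → x i < x j := by
    intro i j h1 hij hj
    rcases eq_or_lt_of_le hj with rfl | hj'
    · rw [hx0]
      rcases eq_or_lt_of_le (show i ≤ m by omega) with rfl | him
      · exact hxneg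
      · exact lt_trans (hxmono i m h1 him le_rfl) hxneg
    · exact hxmono i j h1 hij (by omega)
  have hxlt : ∀ k, 1 ≤ k → k ≤ m → x 1 ≤ x k := by
    intro k h1 h2
    rcases eq_or_lt_of_le h1 with rfl | h
    · exact le_rfl
    · exact (hx 1 k le_rfl h (by omega)).le
  -- the per-index characterization
  have perk : ∀ j : ℕ, j + 1 ≤ m →
      ((∀ t ∈ Set.Icc (x (j+1)) (x (j+2)), PMW.den (Phimat lam x (j+1)) t ≠ 0) ↔
       (PMW.den (Phimat lam x j) (x (j+1)) ≠ 0 ∧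
        lam (j+1) < 2 / (x (j+2) - x (j+1)) -
          deriv (deriv (mev (Phimat lam x j))) (x (j+1)) /
            deriv (mev (Phimat lam x j)) (x (j+1)))) := by
    intro j hj
    have hΔ : 0 < x (j+2) - x (j+1) :=
      sub_pos.2 (hx (j+1) (j+2) (by omega) (by omega) (by omega))
    have hval : PMW.den (Phimat lam x (j+1)) (x (j+2))
        = PMW.den (Phimat lam x j) (x (j+1))
          + (Phimat lam x j) 1 0 * (x (j+2) - x (j+1))
          - lam (j+1) / 2 * (x (j+2) - x (j+1)) * PMW.den (Phimat lam x j) (x (j+1)) := by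
      rw [PMW.den_Phimat_succ]; simp only [PMW.den]; ring
    have key : (∀ t ∈ Set.Icc (x (j+1)) (x (j+2)), PMW.den (Phimat lam x (j+1)) t ≠ 0) ↔
        (PMW.den (Phimat lam x j) (x (j+1)) ≠ 0 ∧
         0 < PMW.den (Phimat lam x j) (x (j+1)) * PMW.den (Phimat lam x (j+1)) (x (j+2))) := by
      constructor
      · intro h
        have hD : PMW.den (Phimat lam x j) (x (j+1)) ≠ 0 := by
          have := h (x (j+1)) ⟨le_rfl, by linarith⟩
          rwa [PMW.den_junction] at this
        refine ⟨hD, ?_⟩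
        have hcont : ContinuousOn (PMW.den (Phimat lam x (j+1))) (Set.Icc (x (j+1)) (x (j+2))) :=
          ((continuous_const.mul continuous_id).add continuous_const).continuousOn
        have hprod := PMW.samesign hcont (by linarith) h
        rwa [PMW.den_junction] at hprod
      · rintro ⟨hD, hpos⟩
        intro t ht
        have h0 : (Phimat lam x (j+1)) 1 0 * x (j+1) + (Phimat lam x (j+1)) 1 1 ≠ 0 := by
          rw [← PMW.den_def, PMW.den_junction]; exact hD
        have hpos' : 0 < ((Phimat lam x (j+1)) 1 0 * x (j+1) + (Phimat lam x (j+1)) 1 1)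
            * ((Phimat lam x (j+1)) 1 0 * x (j+2) + (Phimat lam x (j+1)) 1 1) := by
          rw [← PMW.den_def, ← PMW.den_def, PMW.den_junction]; exact hpos
        exact PMW.affine_ne_zero _ _ _ _ h0 hpos' t ht.1 ht.2
    rw [key]
    refine and_congr_right fun hD => ?_
    rw [PMW.preSchwarz (PMW.det_Phimat lam x j) hD, hval]
    exact PMW.algiff (x (j+2) - x (j+1)) ((Phimat lam x j) 1 0)
      (PMW.den (Phimat lam x j) (x (j+1))) (lam (j+1)) hΔ hD
  constructor
  · -- the equivalence (i) ↔ (ii)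
    constructor
    · intro h k hk1 hkm
      obtain ⟨j, rfl⟩ : ∃ j, k = j + 1 := ⟨k - 1, by omega⟩
      simp only [Nat.add_sub_cancel]
      have := (perk j hkm).mp (fun t ht => h (j+1) hk1 hkm t ht)
      exact this
    · intro h k hk1 hkm t ht
      obtain ⟨j, rfl⟩ : ∃ j, k = j + 1 := ⟨k - 1, by omega⟩
      have h' := h (j+1) hk1 hkm
      simp only [Nat.add_sub_cancel] at h'
      exact (perk j hkm).mpr h' t ht
  · -- construction of Φ
    intro hpole
    have hvalid : ∀ k, 1 ≤ k → k ≤ m → ∀ t, x k ≤ t → t ≤ x (k+1) →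
        PMW.den (Phimat lam x k) t ≠ 0 := fun k h1 h2 t ha hb => hpole k h1 h2 t ⟨ha, hb⟩
    -- the fixed point of the first piece
    have hfix : PMW.Fpc lam x m (x 1) = x 1 := by
      have h12 : x 1 ≤ x (1+1) := (hx 1 2 le_rfl one_lt_two (by omega)).le
      rw [PMW.Fpc_piece hx m 1 le_rfl hm le_rfl (x 1) le_rfl h12]
      exact (PMW.mev_junction lam x 0).trans (PMW.mev_Phimat_zero lam x (x 1))
    -- helper: derivative of a single Möbius piece
    have hmev : ∀ (k : ℕ) (t : ℝ), PMW.den (Phimat lam x k) t ≠ 0 →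
        HasDerivAt (mev (Phimat lam x k)) (1 / (PMW.den (Phimat lam x k) t) ^ 2) t := by
      intro k t h
      have := PMW.hasDerivAt_mev h
      rwa [PMW.det_Phimat] at this
    have hcAt : ∀ (k : ℕ) (t : ℝ), PMW.den (Phimat lam x k) t ≠ 0 →
        ContinuousAt (fun s => 1 / (PMW.den (Phimat lam x k) s) ^ 2) t := by
      intro k t h
      exact ContinuousAt.div continuousAt_const
        (((PMW.hasDerivAt_den (Phimat lam x k) t).continuousAt).pow 2) (pow_ne_zero _ h)
    -- classification of points of Iic 0
    have hclass : ∀ t : ℝ, t ≤ 0 → t < x 1 ∨ (∃ k, 1 ≤ k ∧ k ≤ m ∧ t = x k) ∨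
        (∃ k, 1 ≤ k ∧ k ≤ m ∧ x k < t ∧ t < x (k+1)) ∨ x m < t := by
      intro t ht
      by_cases h1 : t < x 1
      · exact Or.inl h1
      push_neg at h1
      classical
      obtain ⟨k, hk1, hkm, hxk, hmax⟩ : ∃ k, 1 ≤ k ∧ k ≤ m ∧ x k ≤ t ∧
          ∀ i, k < i → i ≤ m → ¬ x i ≤ t :=
        ⟨Nat.findGreatest (fun i => x i ≤ t) m, Nat.le_findGreatest hm h1,
         Nat.findGreatest_le m, Nat.findGreatest_spec (P := fun i => x i ≤ t) hm h1,
         fun i hi him => Nat.findGreatest_is_greatest hi him⟩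
      rcases eq_or_lt_of_le hxk with he | hlt
      · exact Or.inr (Or.inl ⟨k, hk1, hkm, he.symm⟩)
      by_cases hke : k = m
      · subst hke
        exact Or.inr (Or.inr (Or.inr hlt))
      · have h2 : t < x (k+1) := by
          by_contra hcon
          push_neg at hcon
          exact hmax (k+1) (by omega) (by omega) hcon
        exact Or.inr (Or.inr (Or.inl ⟨k, hk1, hkm, hlt, h2⟩))
    -- local analysis helper (interior of a piece)
    have hloc : ∀ (k : ℕ) (t : ℝ), 1 ≤ k → k ≤ m →
        (∀ᶠ s in nhds t, PMW.Fpc lam x m s = mev (Phimat lam x k) s) →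
        (∀ᶠ s in nhds t, PMW.Fdpc lam x m s = 1 / (PMW.den (Phimat lam x k) s) ^ 2) →
        PMW.den (Phimat lam x k) t ≠ 0 →
        HasDerivAt (PMW.Fpc lam x m) (PMW.Fdpc lam x m t) t ∧
          ContinuousAt (PMW.Fdpc lam x m) t ∧ 0 < PMW.Fdpc lam x m t := by
      intro k t hk1 hkm hev hevd hden
      have hGt : PMW.Fdpc lam x m t = 1 / (PMW.den (Phimat lam x k) t) ^ 2 := hevd.self_of_nhds
      refine ⟨?_, ?_, ?_⟩
      · rw [hGt]
        exact (hmev k t hden).congr_of_eventuallyEq hev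
      · exact (continuousAt_congr hevd).mpr (hcAt k t hden)
      · rw [hGt]
        exact one_div_pos.2 (pow_two_pos_of_ne_zero hden)
    -- the main pointwise statement
    have hmain : ∀ t ∈ Set.Iic (0:ℝ), HasDerivAt (PMW.Fpc lam x m) (PMW.Fdpc lam x m t) t ∧
        ContinuousAt (PMW.Fdpc lam x m) t ∧ 0 < PMW.Fdpc lam x m t := by
      intro t ht
      rcases hclass t ht with hcase | ⟨k, hk1, hkm, rfl⟩ | ⟨k, hk1, hkm, hlt1, hlt2⟩ | hcase
      · -- t < x 1
        have hev : ∀ᶠ s in nhds t, PMW.Fpc lam x m s = s := by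
          filter_upwards [Iio_mem_nhds hcase] with s hs
          exact PMW.Fpc_below hxlt m le_rfl s hs
        have hevd : ∀ᶠ s in nhds t, PMW.Fdpc lam x m s = 1 := by
          filter_upwards [Iio_mem_nhds hcase] with s hs
          exact PMW.Fdpc_below hxlt m le_rfl s hs
        have hGt : PMW.Fdpc lam x m t = 1 := hevd.self_of_nhds
        refine ⟨?_, ?_, by rw [hGt]; norm_num⟩
        · rw [hGt]
          exact (hasDerivAt_id t).congr_of_eventuallyEq hev
        · exact (continuousAt_congr hevd).mpr continuousAt_const
      · -- t = x k, junction
        have hkk1 : x k < x (k+1) := hx k (k+1) hk1 (by omega) (by omega)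
        have hDk : PMW.den (Phimat lam x k) (x k) ≠ 0 :=
          hvalid k hk1 hkm (x k) le_rfl hkk1.le
        have hGt : PMW.Fdpc lam x m (x k) = 1 / (PMW.den (Phimat lam x k) (x k)) ^ 2 :=
          PMW.Fdpc_piece hx m k hk1 hkm le_rfl (x k) le_rfl hkk1.le
        -- right part
        have hrev : PMW.Fpc lam x m =ᶠ[nhdsWithin (x k) (Set.Ici (x k))] mev (Phimat lam x k) := by
          have hmem : Set.Iio (x (k+1)) ∈ nhdsWithin (x k) (Set.Ici (x k)) :=
            mem_nhdsWithin_of_mem_nhds (Iio_mem_nhds hkk1)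
          filter_upwards [hmem, self_mem_nhdsWithin] with s hs1 hs2
          exact PMW.Fpc_piece hx m k hk1 hkm le_rfl s hs2 (le_of_lt hs1)
        have hrevd : PMW.Fdpc lam x m =ᶠ[nhdsWithin (x k) (Set.Ici (x k))]
            (fun s => 1 / (PMW.den (Phimat lam x k) s) ^ 2) := by
          have hmem : Set.Iio (x (k+1)) ∈ nhdsWithin (x k) (Set.Ici (x k)) :=
            mem_nhdsWithin_of_mem_nhds (Iio_mem_nhds hkk1)
          filter_upwards [hmem, self_mem_nhdsWithin] with s hs1 hs2
          exact PMW.Fdpc_piece hx m k hk1 hkm le_rfl s hs2 (le_of_lt hs1)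
        have hr : HasDerivWithinAt (PMW.Fpc lam x m) (PMW.Fdpc lam x m (x k)) (Set.Ici (x k)) (x k) := by
          rw [hGt]
          exact ((hmev k (x k) hDk).hasDerivWithinAt).congr_of_eventuallyEq hrev
            (PMW.Fpc_piece hx m k hk1 hkm le_rfl (x k) le_rfl hkk1.le)
        have hcr : ContinuousWithinAt (PMW.Fdpc lam x m) (Set.Ici (x k)) (x k) :=
          ((hcAt k (x k) hDk).continuousWithinAt).congr_of_eventuallyEq hrevd hGt
        -- left part
        have hleft : HasDerivWithinAt (PMW.Fpc lam x m) (PMW.Fdpc lam x m (x k)) (Set.Iic (x k)) (x k) ∧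
            ContinuousWithinAt (PMW.Fdpc lam x m) (Set.Iic (x k)) (x k) := by
          obtain ⟨n, rfl⟩ : ∃ n, k = n + 1 := ⟨k - 1, by omega⟩
          by_cases hn0 : n = 0
          · subst hn0
            have hval1 : PMW.Fdpc lam x m (x 1) = 1 := by
              rw [hGt, PMW.den_junction, PMW.den_Phimat_zero]; norm_num
            have hevl : ∀ s ∈ Set.Iic (x 1), PMW.Fpc lam x m s = s := by
              intro s hs
              rcases eq_or_lt_of_le (Set.mem_Iic.mp hs) with rfl | h
              · exact hfix
              · exact PMW.Fpc_below hxlt m le_rfl s h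
            have hevld : ∀ s ∈ Set.Iic (x 1), PMW.Fdpc lam x m s = 1 := by
              intro s hs
              rcases eq_or_lt_of_le (Set.mem_Iic.mp hs) with rfl | h
              · exact hval1
              · exact PMW.Fdpc_below hxlt m le_rfl s h
            constructor
            · rw [hval1]
              exact ((hasDerivAt_id (x 1)).hasDerivWithinAt).congr hevl (hevl _ (Set.mem_Iic.mpr le_rfl))
            · exact (continuousWithinAt_const).congr hevld (hevld _ (Set.mem_Iic.mpr le_rfl))
          · have hn1 : 1 ≤ n := by omega
            have hnm : n ≤ m := by omega
            have hprev : x n < x (n+1) := hx n (n+1) hn1 (by omega) (by omega)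
            have hDprev : PMW.den (Phimat lam x n) (x (n+1)) ≠ 0 :=
              hvalid n hn1 hnm (x (n+1)) hprev.le le_rfl
            have hvald : PMW.Fdpc lam x m (x (n+1))
                = 1 / (PMW.den (Phimat lam x n) (x (n+1))) ^ 2 := by
              rw [hGt, PMW.den_junction]
            have hmeml : Set.Ioi (x n) ∈ nhdsWithin (x (n+1)) (Set.Iic (x (n+1))) :=
              mem_nhdsWithin_of_mem_nhds (Ioi_mem_nhds hprev)
            have hevl : PMW.Fpc lam x m =ᶠ[nhdsWithin (x (n+1)) (Set.Iic (x (n+1)))]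
                mev (Phimat lam x n) := by
              filter_upwards [hmeml, self_mem_nhdsWithin] with s hs1 hs2
              exact PMW.Fpc_piece hx m n hn1 hnm le_rfl s hs1.le hs2
            have hevld : PMW.Fdpc lam x m =ᶠ[nhdsWithin (x (n+1)) (Set.Iic (x (n+1)))]
                (fun s => 1 / (PMW.den (Phimat lam x n) s) ^ 2) := by
              filter_upwards [hmeml, self_mem_nhdsWithin] with s hs1 hs2
              exact PMW.Fdpc_piece hx m n hn1 hnm le_rfl s hs1.le hs2
            constructor
            · rw [hvald]
              exact ((hmev n (x (n+1)) hDprev).hasDerivWithinAt).congr_of_eventuallyEq hevl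
                (PMW.Fpc_piece hx m n hn1 hnm le_rfl (x (n+1)) hprev.le le_rfl)
            · exact ((hcAt n (x (n+1)) hDprev).continuousWithinAt).congr_of_eventuallyEq
                hevld hvald
        refine ⟨?_, ?_, ?_⟩
        · have hu := hleft.1.union hr
          rw [Set.Iic_union_Ici] at hu
          exact hasDerivWithinAt_univ.mp hu
        · have hu := hleft.2.union hcr
          rw [Set.Iic_union_Ici] at hu
          rwa [continuousWithinAt_univ] at hu
        · rw [hGt]
          exact one_div_pos.2 (pow_two_pos_of_ne_zero hDk)
      · -- interior of a piece
        have hden : PMW.den (Phimat lam x k) t ≠ 0 := hvalid k hk1 hkm t hlt1.le hlt2.le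
        refine hloc k t hk1 hkm ?_ ?_ hden
        · filter_upwards [Ioo_mem_nhds hlt1 hlt2] with s hs
          exact PMW.Fpc_piece hx m k hk1 hkm le_rfl s hs.1.le hs.2.le
        · filter_upwards [Ioo_mem_nhds hlt1 hlt2] with s hs
          exact PMW.Fdpc_piece hx m k hk1 hkm le_rfl s hs.1.le hs.2.le
      · -- x m < t ≤ 0
        have hden : PMW.den (Phimat lam x m) t ≠ 0 :=
          hvalid m hm le_rfl t hcase.le (by rw [hx0]; exact ht)
        refine hloc m t hm le_rfl ?_ ?_ hden
        · filter_upwards [Ioi_mem_nhds hcase] with s hs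
          exact PMW.Fpc_top hm s hs.le
        · filter_upwards [Ioi_mem_nhds hcase] with s hs
          exact PMW.Fdpc_top hm s hs.le
    -- assemble
    have hIic : UniqueDiffOn ℝ (Set.Iic (0:ℝ)) := uniqueDiffOn_Iic 0
    have hGc : ContinuousOn (PMW.Fdpc lam x m) (Set.Iic (0:ℝ)) :=
      fun t ht => ((hmain t ht).2.1).continuousWithinAt
    have hdiff : DifferentiableOn ℝ (PMW.Fpc lam x m) (Set.Iic (0:ℝ)) :=
      fun t ht => ((hmain t ht).1).differentiableAt.differentiableWithinAt
    have hdw : ∀ t ∈ Set.Iic (0:ℝ), derivWithin (PMW.Fpc lam x m) (Set.Iic 0) t = PMW.Fdpc lam x m t :=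
      fun t ht => ((hmain t ht).1.hasDerivWithinAt).derivWithin (hIic t ht)
    have hcd : ContDiffOn ℝ 1 (PMW.Fpc lam x m) (Set.Iic (0:ℝ)) := by
      refine (contDiffOn_succ_iff_derivWithin hIic (n := 0)).mpr ⟨hdiff, ?_, ?_⟩
      · intro h; simp at h
      · rw [contDiffOn_zero]
        exact hGc.congr hdw
    refine ⟨PMW.Fpc lam x m, ?_, ?_, hcd, ?_⟩
    · intro t ht
      rcases eq_or_lt_of_le ht with rfl | h
      · exact hfix
      · exact PMW.Fpc_below hxlt m le_rfl t h
    · intro k hk1 hkm t ht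
      exact PMW.Fpc_piece hx m k hk1 hkm le_rfl t ht.1 ht.2
    · refine strictMonoOn_of_deriv_pos (convex_Iic 0) hcd.continuousOn ?_
      intro t ht
      rw [interior_Iic] at ht
      rw [(hmain t (Set.mem_Iic.mpr ht.le)).1.deriv]
      exact (hmain t (Set.mem_Iic.mpr ht.le)).2.2
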